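/- Let R be an elementary divisor domain, g(t) ∈ R[t] monic of degree n, and a(t) a monic divisor of g(t) in R[t] of degree m. Then the matrix a(C_g) is equivalent over R to the diagonal matrix I_{n-m} ⊕ 0_{m×m}; that is, the Smith form of a(C_g) has n - m invariant factors equal to 1 and m invariant factors equal to 0. -/

import Mathlib

open Polynomial Matrix

def companion {R : Type*} [CommRing R] (g : R[X]) :
    Matrix (Fin g.natDegree) (Fin g.natDegree) R :=
  Matrix.of fun i j =>
    if (i : ℕ) = 0 then -g.coeff (g.natDegree - 1 - (j : ℕ))
    else if (i : ℕ) = (j : ℕ) + 1 then 1 else 0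

/-- An elementary divisor domain: for any `a b c` there are `x y z w` with
`gcd(a,b,c) = zxa + zyb + wyc`. -/
def IsEDD (R : Type*) [CommRing R] : Prop :=
  ∀ a b c : R, ∃ d x y z w : R,
    (d ∣ a ∧ d ∣ b ∧ d ∣ c ∧ ∀ e : R, e ∣ a → e ∣ b → e ∣ c → e ∣ d) ∧
    d = z * x * a + z * y * b + w * y * c

namespace Stmt3Aux

variable {R : Type*} [CommRing R] [IsDomain R]

/-- coefficient vector (in reversed order) of `f mod g` -/
noncomputable def iota (g f : R[X]) : Fin g.natDegree → R :=
  fun i => (f %ₘ g).coeff (g.natDegree - 1 - (i : ℕ))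

lemma iota_mulVec_X {g : R[X]} (hg : g.Monic) (f : R[X]) :
    (companion g)ᵀ.mulVec (iota g f) = iota g (X * f) := by
  set n := g.natDegree with hn
  have hgd : g.degree = (g.natDegree : WithBot ℕ) := degree_eq_natDegree hg.ne_zero
  have h1 : iota g (f %ₘ g) = iota g f := by
    funext i
    simp only [iota]
    rw [(modByMonic_eq_self_iff hg).2 (degree_modByMonic_lt f hg)]
  have h2 : iota g (X * (f %ₘ g)) = iota g (X * f) := by
    funext i
    simp only [iota]
    congr 1
    apply modByMonic_eq_of_dvd_sub hg
    refine ⟨-(X * (f /ₘ g)), ?_⟩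
    have : f %ₘ g = f - g * (f /ₘ g) := modByMonic_eq_sub_mul_div f g
    rw [this]; ring
  rw [← h1, ← h2]
  generalize hr' : f %ₘ g = r
  have hr : r.degree < g.degree := hr' ▸ degree_modByMonic_lt f hg
  have hrr : r %ₘ g = r := (modByMonic_eq_self_iff hg).2 hr
  have hrc : ∀ kk, g.natDegree ≤ kk → r.coeff kk = 0 := by
    intro kk hkk
    exact (degree_lt_iff_coeff_zero r g.natDegree).1 (hr.trans_le (le_of_eq hgd)) kk hkk
  funext i
  have hn0 : 0 < n := i.pos
  set c := r.coeff (n - 1) with hc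
  have key : (X * r) %ₘ g = X * r - C c * g := by
    have hdvd2 : g ∣ (X * r) - (X * r - C c * g) := ⟨C c, by ring⟩
    rw [modByMonic_eq_of_dvd_sub hg hdvd2]
    apply (modByMonic_eq_self_iff hg).2
    rw [hgd, degree_lt_iff_coeff_zero]
    intro kk hkk
    have hk1 : kk = (kk - 1) + 1 := by omega
    rw [coeff_sub, coeff_C_mul, hk1, coeff_X_mul]
    by_cases hkn : kk = n
    · have e1 : kk - 1 = n - 1 := by omega
      have e2 : (kk - 1) + 1 = n := by omega
      have hgn : g.coeff n = 1 := hg.coeff_natDegree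
      rw [e2, e1, hgn, hc]
      ring
    · have e1 : n ≤ kk - 1 := by omega
      rw [hrc _ e1, coeff_eq_zero_of_natDegree_lt (by omega : g.natDegree < (kk-1)+1)]
      ring
  -- left side
  have hls : ((companion g)ᵀ.mulVec (iota g r)) i
      = ∑ j : Fin n, (companion g) j i * r.coeff (n - 1 - (j:ℕ)) := by
    simp only [Matrix.mulVec, dotProduct, Matrix.transpose_apply, iota, hrr]; rfl
  have step : ∀ j : Fin n, (companion g) j i * r.coeff (n - 1 - (j:ℕ)) =
      (if j = (⟨0, hn0⟩ : Fin n) then -g.coeff (n - 1 - (i:ℕ)) * r.coeff (n-1) else 0) +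
      (if (j:ℕ) = (i:ℕ) + 1 then r.coeff (n - 1 - ((i:ℕ)+1)) else 0) := by
    intro j
    simp only [companion, Matrix.of_apply]
    by_cases h0 : (j:ℕ) = 0
    · have hj : j = (⟨0, hn0⟩ : Fin n) := Fin.ext h0
      have h1 : ¬ ((j:ℕ) = (i:ℕ) + 1) := by omega
      simp [h0, hj, h1]; exact Or.inl rfl
    · have hj : ¬ j = (⟨0, hn0⟩ : Fin n) := by
        intro hh; apply h0; rw [hh]
      by_cases h1 : (j:ℕ) = (i:ℕ) + 1
      · simp [h0, h1, hj]
      · simp [h0, h1, hj]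
  rw [hls, Finset.sum_congr rfl (fun j _ => step j), Finset.sum_add_distrib]
  have s1 : (∑ j : Fin n, if j = (⟨0, hn0⟩ : Fin n) then
      -g.coeff (n - 1 - (i:ℕ)) * r.coeff (n-1) else 0)
      = -g.coeff (n - 1 - (i:ℕ)) * r.coeff (n-1) := by
    rw [Finset.sum_ite_eq' Finset.univ]
    simp
  have s2 : (∑ j : Fin n, if (j:ℕ) = (i:ℕ) + 1 then r.coeff (n - 1 - ((i:ℕ)+1)) else 0)
      = if (i:ℕ) + 1 < n then r.coeff (n - 1 - ((i:ℕ)+1)) else 0 := by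
    by_cases hi : (i:ℕ) + 1 < n
    · have hiff : ∀ j : Fin n, ((j:ℕ) = (i:ℕ)+1) = (j = (⟨(i:ℕ)+1, hi⟩ : Fin n)) := by
        intro j
        apply propext
        exact ⟨fun h => Fin.ext h, fun h => by rw [h]⟩
      simp only [hiff]
      rw [Finset.sum_ite_eq' Finset.univ]
      simp [hi]
    · rw [if_neg hi, Finset.sum_eq_zero]
      intro j _
      rw [if_neg (by have := j.isLt; omega)]
  rw [s1, s2]
  -- right side
  have hrs : iota g (X * r) i = (X * r).coeff (n - 1 - (i:ℕ)) - c * g.coeff (n - 1 - (i:ℕ)) := by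
    simp only [iota, key, coeff_sub, coeff_C_mul]; rfl
  rw [hrs]
  have hxr : (X * r).coeff (n - 1 - (i:ℕ))
      = if (i:ℕ) + 1 < n then r.coeff (n - 1 - ((i:ℕ)+1)) else 0 := by
    by_cases hi : (i:ℕ) + 1 < n
    · have h2 : n - 1 - (i:ℕ) = (n - 1 - ((i:ℕ)+1)) + 1 := by omega
      rw [if_pos hi, h2, coeff_X_mul]
    · have h3 : n - 1 - (i:ℕ) = 0 := by have := i.isLt; omega
      rw [if_neg hi, h3, mul_coeff_zero, coeff_X_zero, zero_mul]
  rw [hxr]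
  ring

lemma iota_add {g : R[X]} (f₁ f₂ : R[X]) : iota g (f₁ + f₂) = iota g f₁ + iota g f₂ := by
  funext i
  simp [iota, add_modByMonic]

lemma aeval_mulVec {g : R[X]} (hg : g.Monic) (p f : R[X]) :
    (Polynomial.aeval (companion g)ᵀ p).mulVec (iota g f) = iota g (p * f) := by
  induction p using Polynomial.induction_on generalizing f with
  | C cc =>
      rw [aeval_C, Algebra.algebraMap_eq_smul_one, smul_mulVec, one_mulVec]
      funext i
      rw [show C cc * f = cc • f from (smul_eq_C_mul cc).symm]
      simp [iota, smul_modByMonic, coeff_smul, smul_eq_mul]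
  | add p q hp hq =>
      rw [map_add, add_mulVec, hp, hq, ← iota_add, add_mul]
  | monomial kk cc ih =>
      have h1 : (C cc * X ^ (kk+1)) = (C cc * X ^ kk) * X := by ring
      rw [h1, _root_.map_mul, aeval_X, ← mulVec_mulVec, iota_mulVec_X hg, ih]
      congr 1
      ring

end Stmt3Aux

set_option maxHeartbeats 1000000

open Stmt3Aux in
/-- If `a` is a monic divisor of the monic `g` of degree `n`, with `deg a = m`, then
`a(C_g)` is equivalent over `R` to `I_{n-m} ⊕ 0_{m×m}`. -/
theorem stmt3 {R : Type*} [CommRing R] [IsDomain R] (hR : IsEDD R)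
    (g a : R[X]) (hg : g.Monic) (ha : a.Monic) (hdvd : a ∣ g) :
    ∃ U V : Matrix (Fin g.natDegree) (Fin g.natDegree) R,
      IsUnit U.det ∧ IsUnit V.det ∧
      U * Polynomial.aeval (companion g) a * V =
        Matrix.of (fun (i j : Fin g.natDegree) =>
          if (i : ℕ) = (j : ℕ) ∧ (i : ℕ) < g.natDegree - a.natDegree then 1 else 0) := by
  classical
  obtain ⟨b, hb⟩ := hdvd
  have hbm : b.Monic := ha.of_mul_monic_left (hb ▸ hg)
  have hadd : a.natDegree + b.natDegree = g.natDegree := by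
    rw [hb, natDegree_mul ha.ne_zero hbm.ne_zero]
  set n := g.natDegree with hn
  set m := a.natDegree with hm
  set k := n - m with hk
  have hkb : b.natDegree = k := by omega
  set T : Matrix (Fin n) (Fin n) R := (companion g)ᵀ with hT
  set A : Matrix (Fin n) (Fin n) R := Polynomial.aeval T a with hA
  set f' : Fin n → R[X] :=
    fun j => if (j:ℕ) < k then a * X ^ (k - 1 - (j:ℕ)) else X ^ (n - 1 - (j:ℕ)) with hf'
  set eh : Fin n → R[X] :=
    fun j => if (j:ℕ) < m then X ^ (m - 1 - (j:ℕ)) * b else X ^ (n - 1 - (j:ℕ)) with heh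
  set σ : Equiv.Perm (Fin n) :=
    { toFun := fun j => if h : (j:ℕ) < k then ⟨(j:ℕ) + m, by omega⟩
        else ⟨(j:ℕ) - k, by have := j.isLt; omega⟩
      invFun := fun j => if h : (j:ℕ) < m then ⟨(j:ℕ) + k, by omega⟩
        else ⟨(j:ℕ) - m, by have := j.isLt; omega⟩
      left_inv := by
        intro j
        rcases Nat.lt_or_ge (j:ℕ) k with hj | hj
        · simp only [dif_pos hj, Fin.val_mk,
            dif_neg (show ¬ (j:ℕ) + m < m by omega)]
          apply Fin.ext
          simp only [Fin.val_mk]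
          omega
        · simp only [dif_neg (show ¬ (j:ℕ) < k by omega), Fin.val_mk,
            dif_pos (show (j:ℕ) - k < m by have := j.isLt; omega)]
          apply Fin.ext
          simp only [Fin.val_mk]
          omega
      right_inv := by
        intro j
        rcases Nat.lt_or_ge (j:ℕ) m with hj | hj
        · simp only [dif_pos hj, Fin.val_mk,
            dif_neg (show ¬ (j:ℕ) + k < k by omega)]
          apply Fin.ext
          simp only [Fin.val_mk]
          omega
        · simp only [dif_neg (show ¬ (j:ℕ) < m by omega), Fin.val_mk,
            dif_pos (show (j:ℕ) - m < k by have := j.isLt; omega)]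
          apply Fin.ext
          simp only [Fin.val_mk]
          omega } with hσ
  let W : Matrix (Fin n) (Fin n) R := Matrix.of fun i j => (f' j).coeff (n - 1 - (i:ℕ))
  let Vh : Matrix (Fin n) (Fin n) R := Matrix.of fun i j => (eh j).coeff (n - 1 - (i:ℕ))
  let V' : Matrix (Fin n) (Fin n) R := Vh.submatrix id σ
  have hV' : V' = Vh.submatrix id σ := rfl
  have hf'deg : ∀ j : Fin n, (f' j).natDegree = n - 1 - (j:ℕ) := by
    intro j
    by_cases hj : (j:ℕ) < k
    · simp only [hf', if_pos hj]
      rw [natDegree_mul ha.ne_zero (monic_X_pow _).ne_zero, natDegree_X_pow]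
      omega
    · simp only [hf', if_neg hj, natDegree_X_pow]
  have hf'monic : ∀ j : Fin n, (f' j).Monic := by
    intro j
    by_cases hj : (j:ℕ) < k
    · simp only [hf', if_pos hj]; exact ha.mul (monic_X_pow _)
    · simp only [hf', if_neg hj]; exact monic_X_pow _
  have hehdeg : ∀ j : Fin n, (eh j).natDegree = n - 1 - (j:ℕ) := by
    intro j
    by_cases hj : (j:ℕ) < m
    · simp only [heh, if_pos hj]
      rw [natDegree_mul (monic_X_pow _).ne_zero hbm.ne_zero, natDegree_X_pow]
      omega
    · simp only [heh, if_neg hj, natDegree_X_pow]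
  have hehmonic : ∀ j : Fin n, (eh j).Monic := by
    intro j
    by_cases hj : (j:ℕ) < m
    · simp only [heh, if_pos hj]; exact (monic_X_pow _).mul hbm
    · simp only [heh, if_neg hj]; exact monic_X_pow _
  have hWtri : W.BlockTriangular OrderDual.toDual := by
    intro i j hij
    have hlt : i < j := hij
    show (f' j).coeff (n - 1 - (i:ℕ)) = 0
    apply coeff_eq_zero_of_natDegree_lt
    rw [hf'deg j]
    have := j.isLt
    have : (i:ℕ) < (j:ℕ) := hlt
    omega
  have hWdet : W.det = 1 := by
    rw [Matrix.det_of_lowerTriangular W hWtri]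
    apply Finset.prod_eq_one
    intro i _
    show (f' i).coeff (n - 1 - (i:ℕ)) = 1
    rw [← hf'deg i]
    exact (hf'monic i).coeff_natDegree
  have hVhtri : Vh.BlockTriangular OrderDual.toDual := by
    intro i j hij
    have hlt : i < j := hij
    show (eh j).coeff (n - 1 - (i:ℕ)) = 0
    apply coeff_eq_zero_of_natDegree_lt
    rw [hehdeg j]
    have := j.isLt
    have : (i:ℕ) < (j:ℕ) := hlt
    omega
  have hVhdet : Vh.det = 1 := by
    rw [Matrix.det_of_lowerTriangular Vh hVhtri]
    apply Finset.prod_eq_one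
    intro i _
    show (eh i).coeff (n - 1 - (i:ℕ)) = 1
    rw [← hehdeg i]
    exact (hehmonic i).coeff_natDegree
  have hWunit : IsUnit W.det := by rw [hWdet]; exact isUnit_one
  have hV'det : IsUnit V'.det := by
    rw [hV', Matrix.det_permute' σ Vh, hVhdet, mul_one]
    rcases Int.units_eq_one_or (Equiv.Perm.sign σ) with h | h <;> rw [h] <;> simp
  have hVcol : ∀ j : Fin n, (fun i => V' i j) = iota g (eh (σ j)) := by
    intro j
    funext i
    show (eh (σ j)).coeff (n - 1 - (i:ℕ)) = ((eh (σ j)) %ₘ g).coeff (n - 1 - (i:ℕ))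
    rw [(modByMonic_eq_self_iff hg).2 ?_]
    rw [degree_eq_natDegree hg.ne_zero]
    apply lt_of_le_of_lt (degree_le_natDegree)
    have h1 : (eh (σ j)).natDegree < n := by
      rw [hehdeg (σ j)]; have := (σ j).isLt; have := i.isLt; omega
    exact_mod_cast h1
  have hkey : A * V' =
      W * Matrix.of (fun (i j : Fin n) => if (i:ℕ) = (j:ℕ) ∧ (i:ℕ) < k then (1:R) else 0) := by
    ext i j
    have hcol : (A * V') i j = (A.mulVec (fun i' => V' i' j)) i := by
      simp [Matrix.mul_apply, Matrix.mulVec, dotProduct]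
    rw [hcol, hVcol j, hA, aeval_mulVec hg]
    rw [Matrix.mul_apply]
    by_cases hj : (j:ℕ) < k
    · have hσ1 : ((σ j : Fin n) : ℕ) = (j:ℕ) + m := by
        show ((if h : (j:ℕ) < k then _ else _ : Fin n) : ℕ) = _
        rw [dif_pos hj]
      have he : eh (σ j) = X ^ (n - 1 - ((j:ℕ) + m)) := by
        rw [heh]
        simp only [hσ1]
        rw [if_neg (by omega)]
      have hae : a * eh (σ j) = f' j := by
        rw [he, hf']
        simp only [if_pos hj]
        congr 2
        omega
      rw [hae]
      have hL : iota g (f' j) i = W i j := by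
        show ((f' j) %ₘ g).coeff _ = _
        rw [(modByMonic_eq_self_iff hg).2 ?_]
        · rfl
        · rw [degree_eq_natDegree hg.ne_zero]
          apply lt_of_le_of_lt (degree_le_natDegree)
          have h1 : (f' j).natDegree < n := by
            rw [hf'deg j]; have := i.isLt; omega
          exact_mod_cast h1
      rw [hL]
      rw [Finset.sum_eq_single j]
      · have : (Matrix.of (fun (i j : Fin n) =>
            if (i:ℕ) = (j:ℕ) ∧ (i:ℕ) < k then (1:R) else 0)) j j = 1 := by
          simp [hj]
        rw [this, mul_one]
      · intro l _ hlj
        have : (Matrix.of (fun (i j : Fin n) =>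
            if (i:ℕ) = (j:ℕ) ∧ (i:ℕ) < k then (1:R) else 0)) l j = 0 := by
          simp only [Matrix.of_apply]
          rw [if_neg]
          rintro ⟨h1, _⟩
          exact hlj (Fin.ext h1)
        rw [this, mul_zero]
      · intro h
        exact absurd (Finset.mem_univ j) h
    · have hσ1 : ((σ j : Fin n) : ℕ) = (j:ℕ) - k := by
        show ((if h : (j:ℕ) < k then _ else _ : Fin n) : ℕ) = _
        rw [dif_neg hj]
      have he : eh (σ j) = X ^ (m - 1 - ((j:ℕ) - k)) * b := by
        rw [heh]
        simp only [hσ1]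
        rw [if_pos (by have := j.isLt; omega)]
      have hae : a * eh (σ j) = g * X ^ (m - 1 - ((j:ℕ) - k)) := by
        rw [he, hb]; ring
      rw [hae]
      have hz : iota g (g * X ^ (m - 1 - ((j:ℕ) - k))) i = 0 := by
        simp [iota, self_mul_modByMonic hg]
      rw [hz]
      symm
      apply Finset.sum_eq_zero
      intro l _
      have : (Matrix.of (fun (i j : Fin n) =>
          if (i:ℕ) = (j:ℕ) ∧ (i:ℕ) < k then (1:R) else 0)) l j = 0 := by
        simp only [Matrix.of_apply]
        rw [if_neg]
        rintro ⟨h1, h2⟩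
        omega
      rw [this, mul_zero]
  have htr : Polynomial.aeval (companion g) a = Aᵀ := by
    rw [hA, hT]
    rw [aeval_eq_sum_range, aeval_eq_sum_range, Matrix.transpose_sum]
    apply Finset.sum_congr rfl
    intro l _
    rw [Matrix.transpose_smul, Matrix.transpose_pow, Matrix.transpose_transpose]
  refine ⟨V'ᵀ, (W⁻¹)ᵀ, ?_, ?_, ?_⟩
  · rw [Matrix.det_transpose]; exact hV'det
  · rw [Matrix.det_transpose]; exact Matrix.isUnit_nonsing_inv_det W hWunit
  · rw [htr]
    have hstep : V'ᵀ * Aᵀ * (W⁻¹)ᵀ = (W⁻¹ * (A * V'))ᵀ := by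
      rw [Matrix.transpose_mul, Matrix.transpose_mul, Matrix.mul_assoc]
    rw [hstep, hkey, ← Matrix.mul_assoc, Matrix.nonsing_inv_mul W hWunit, Matrix.one_mul]
    ext i j
    simp only [Matrix.transpose_apply, Matrix.of_apply]
    by_cases h1 : (i:ℕ) = (j:ℕ)
    · simp [h1]
    · rw [if_neg (by rintro ⟨h2, _⟩; exact h1 h2.symm), if_neg (by rintro ⟨h2, _⟩; exact h1 h2)]
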